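/- arXiv:1308.5516 — 5 statements merged into one kernel-verified Lean document; each statement's English description precedes it below -/
import Mathlib

section
/- Let ρ be the semicircle law and let k ≥ 1. Let D_k^{(G)} be the k×k matrix with entries (D_k^{(G)})_{i,j} = C(i,(i−j)/2) − C(i,(i−j)/2−1) when 1 ≤ j ≤ i ≤ k and i+j is even, and 0 otherwise. Then for all 1 ≤ i, j ≤ k, (D_k^{(G)} (D_k^{(G)})^T)_{i,j} = m_{i+j}(ρ) − m_i(ρ)·m_j(ρ). -/
open MeasureTheory Matrix Finset Real
open scoped ENNReal NNReal

/-- The semicircle law `ρ(dx) = (1/(2π))·√(4−x²)·1_{[−2,2]}(x) dx`. -/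
noncomputable def semicircle : Measure ℝ :=
  volume.withDensity fun x =>
    ENNReal.ofReal (if x ∈ Set.Icc (-2 : ℝ) 2 then Real.sqrt (4 - x ^ 2) / (2 * Real.pi) else 0)

/-- The `r`-th moment of the semicircle law. -/
noncomputable def mSC (r : ℕ) : ℝ := ∫ x, x ^ r ∂semicircle

/-- Binomial coefficient `C(n, r)` with an integer lower argument,
with the convention `C(n, r) = 0` for `r < 0`. -/
noncomputable def chooseZ (n : ℕ) (r : ℤ) : ℝ :=
  if 0 ≤ r then (n.choose r.toNat : ℝ) else 0

/-- The matrix `D_k^{(G)}` (indices `1 ≤ i, j ≤ k`, here realised by `Fin k` with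
`i ↦ i+1`): entries `C(i, (i−j)/2) − C(i, (i−j)/2 − 1)` when `j ≤ i` and `i + j` is
even, and `0` otherwise. -/
noncomputable def DGauss (k : ℕ) : Matrix (Fin k) (Fin k) ℝ := fun i j =>
  if j.1 ≤ i.1 ∧ (i.1 + j.1) % 2 = 0 then
    chooseZ (i.1 + 1) ((((i.1 : ℤ) + 1) - ((j.1 : ℤ) + 1)) / 2) -
      chooseZ (i.1 + 1) ((((i.1 : ℤ) + 1) - ((j.1 : ℤ) + 1)) / 2 - 1)
  else 0


/-- Ballot numbers: `B n l` = number of nonnegative lattice paths of length `n`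
from `0` to `l`. -/
noncomputable def B : ℕ → ℕ → ℝ
  | 0, 0 => 1
  | 0, _ + 1 => 0
  | n + 1, 0 => B n 1
  | n + 1, l + 1 => B n l + B n (l + 2)

lemma B_zero_of_gt : ∀ n l, n < l → B n l = 0 := by
  intro n
  induction n with
  | zero => intro l hl; match l, hl with | l+1, _ => rfl
  | succ n ih =>
    intro l hl
    match l, hl with
    | l+1, hl =>
      show B n l + B n (l+2) = 0
      rw [ih l (by omega), ih (l+2) (by omega), add_zero]

lemma B_zero_of_odd : ∀ n l, (n + l) % 2 = 1 → B n l = 0 := by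
  intro n
  induction n with
  | zero =>
    intro l hl
    match l, hl with | l+1, _ => rfl
  | succ n ih =>
    intro l hl
    match l with
    | 0 => show B n 1 = 0; exact ih 1 (by omega)
    | l+1 =>
      show B n l + B n (l+2) = 0
      rw [ih l (by omega), ih (l+2) (by omega), add_zero]

/-- `C(n,q) - C(n,q-1)` with the convention `C(n,-1) = 0`. -/
noncomputable def bb (n q : ℕ) : ℝ :=
  (n.choose q : ℝ) - if q = 0 then 0 else (n.choose (q - 1) : ℝ)

lemma B_eq_bb : ∀ n l, l ≤ n → (n + l) % 2 = 0 → B n l = bb n ((n - l) / 2) := by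
  intro n
  induction n with
  | zero =>
    intro l hl _
    interval_cases l
    show (1:ℝ) = bb 0 0
    simp [bb]
  | succ n ih =>
    intro l hl hpar
    match l with
    | 0 =>
      show B n 1 = bb (n+1) ((n+1)/2)
      have hn1 : 1 ≤ n := by omega
      rw [ih 1 hn1 (by omega)]
      -- n = 2t+1
      obtain ⟨t, rfl⟩ : ∃ t, n = 2 * t + 1 := ⟨n / 2, by omega⟩
      have h1 : (2 * t + 1 - 1) / 2 = t := by omega
      have h2 : (2 * t + 1 + 1) / 2 = t + 1 := by omega
      rw [h1, h2]
      unfold bb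
      rcases Nat.eq_zero_or_pos t with rfl | ht
      · norm_num
      · have hp1 : (2*t + 1 + 1).choose (t+1) = (2*t+1).choose t + (2*t+1).choose (t+1) :=
          Nat.choose_succ_succ _ _
        have hp2 : (2*t + 1 + 1).choose t = (2*t+1).choose (t-1) + (2*t+1).choose t := by
          have := Nat.choose_succ_succ (2*t+1) (t-1)
          have ht' : t - 1 + 1 = t := by omega
          simp only [Nat.succ_eq_add_one, ht'] at this
          exact this
        have hsym : (2*t+1).choose (t+1) = (2*t+1).choose t := by
          rw [← Nat.choose_symm (by omega : t + 1 ≤ 2*t+1)]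
          congr 1
          omega
        have ht0 : ¬ (t + 1 = 0) := by omega
        have ht1 : ¬ (t = 0) := by omega
        simp only [if_neg ht0, if_neg ht1]
        have h3 : t + 1 - 1 = t := by omega
        rw [h3, hp1, hp2, hsym]
        push_cast
        ring
    | l+1 =>
      have hpar' : (n + l) % 2 = 0 := by omega
      have hq : (n + 1 - (l + 1)) / 2 = (n - l) / 2 := by omega
      rw [hq]
      rcases Nat.lt_or_ge l n with hlt | hge
      · -- l < n, so l + 2 ≤ n by parity
        have hl2 : l + 2 ≤ n := by omega
        show B n l + B n (l+2) = bb (n+1) ((n-l)/2)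
        rw [ih l (by omega) hpar', ih (l+2) hl2 (by omega)]
        obtain ⟨q', hq'⟩ : ∃ q', (n - l) / 2 = q' + 1 := ⟨(n-l)/2 - 1, by omega⟩
        have hql : (n - (l+2)) / 2 = q' := by omega
        rw [hql, hq']
        unfold bb
        simp only [Nat.add_sub_cancel]
        have hpascal : (n+1).choose (q'+1) = n.choose q' + n.choose (q'+1) :=
          Nat.choose_succ_succ _ _
        simp only [Nat.add_sub_cancel, if_neg (Nat.succ_ne_zero q')]
        rcases Nat.eq_zero_or_pos q' with rfl | hq'
        · simp [hpascal]
        · obtain ⟨q'', rfl⟩ : ∃ q'', q' = q'' + 1 := ⟨q' - 1, by omega⟩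
          have hpascal2 : (n+1).choose (q''+1) = n.choose q'' + n.choose (q''+1) :=
            Nat.choose_succ_succ _ _
          simp only [if_neg (Nat.succ_ne_zero q''), Nat.add_sub_cancel]
          rw [hpascal, hpascal2]
          push_cast
          ring
      · -- l = n by l+1 ≤ n+1 and l ≤ n ... l = n
        have : l = n := by omega
        subst this
        show B l l + B l (l+2) = bb (l+1) ((l-l)/2)
        rw [B_zero_of_gt l (l+2) (by omega), ih l le_rfl (by omega)]
        simp [bb]

-- convolution
lemma F_expand (K a b : ℕ) (hb : b ≤ K + 1) :
    ∑ l ∈ range (K+2), B (a+1) l * B b l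
      = B a 0 * B b 1 + B a 1 * B b 0
        + ∑ l ∈ range (K+1), B a (l+2) * B b (l+1)
        + ∑ l ∈ range (K+1), B b (l+2) * B a (l+1) := by
  rw [Finset.sum_range_succ' (fun l => B (a+1) l * B b l) (K+1)]
  have h1 : ∀ l, B (a+1) (l+1) * B b (l+1) = B a l * B b (l+1) + B a (l+2) * B b (l+1) := by
    intro l
    show (B a l + B a (l+2)) * _ = _
    ring
  rw [Finset.sum_congr rfl fun l _ => h1 l, Finset.sum_add_distrib]
  have h2 : ∑ l ∈ range (K+1), B a l * B b (l+1)
      = ∑ l ∈ range K, B a (l+1) * B b (l+1+1) + B a 0 * B b 1 :=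
    Finset.sum_range_succ' (fun l => B a l * B b (l+1)) K
  have h3 : ∑ l ∈ range (K+1), B b (l+2) * B a (l+1)
      = ∑ l ∈ range K, B b (l+2) * B a (l+1) + B b (K+2) * B a (K+1) :=
    Finset.sum_range_succ (fun l => B b (l+2) * B a (l+1)) K
  have h4 : B b (K+2) = 0 := B_zero_of_gt _ _ (by omega)
  have h5 : ∑ l ∈ range K, B a (l+1) * B b (l+1+1)
      = ∑ l ∈ range K, B b (l+2) * B a (l+1) :=
    Finset.sum_congr rfl fun l _ => mul_comm _ _
  have h6 : B (a+1) 0 = B a 1 := rfl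
  rw [h2, h5, h6]
  rw [h4] at h3
  rw [show (∑ l ∈ range K, B b (l+2) * B a (l+1))
      = ∑ l ∈ range (K+1), B b (l+2) * B a (l+1) - 0 * B a (K+1) from by
    rw [h3]; ring]
  ring

lemma F_symm (K a b : ℕ) (ha : a ≤ K + 1) (hb : b ≤ K + 1) :
    ∑ l ∈ range (K+2), B (a+1) l * B b l = ∑ l ∈ range (K+2), B (b+1) l * B a l := by
  rw [F_expand K a b hb, F_expand K b a ha]
  ring

lemma B_conv (m : ℕ) : ∀ n N, m + n ≤ N + 1 →
    ∑ l ∈ range (N+2), B m l * B n l = B (m+n) 0 := by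
  induction m with
  | zero =>
    intro n N h
    rw [Finset.sum_range_succ' (fun l => B 0 l * B n l) (N+1)]
    have : ∀ l, B 0 (l+1) = 0 := fun l => rfl
    simp [this, show B 0 0 = (1:ℝ) from rfl]
  | succ m ih =>
    intro n N h
    have hstep := F_symm N m n (by omega) (by omega)
    have hcomm : ∑ l ∈ range (N+2), B (n+1) l * B m l
        = ∑ l ∈ range (N+2), B m l * B (n+1) l :=
      Finset.sum_congr rfl fun l _ => mul_comm _ _
    rw [hstep, hcomm, ih (n+1) N (by omega)]
    congr 1
    omega

noncomputable def Jsc (r : ℕ) : ℝ := ∫ x in (-2:ℝ)..2, Real.sqrt (4 - x ^ 2) * x ^ r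

lemma mSC_eq_J (r : ℕ) : mSC r = Jsc r / (2 * Real.pi) := by
  have hg : Measurable (fun x : ℝ =>
      if x ∈ Set.Icc (-2:ℝ) 2 then Real.sqrt (4 - x ^ 2) / (2 * Real.pi) else 0) := by
    apply Measurable.ite measurableSet_Icc
    · exact (Real.continuous_sqrt.comp (by continuity)).measurable.div_const _
    · exact measurable_const
  unfold mSC semicircle
  rw [show (fun x : ℝ => ENNReal.ofReal (if x ∈ Set.Icc (-2:ℝ) 2 then
        Real.sqrt (4 - x ^ 2) / (2 * Real.pi) else 0))
      = (fun x : ℝ => (((fun y : ℝ => if y ∈ Set.Icc (-2:ℝ) 2 then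
        Real.sqrt (4 - y ^ 2) / (2 * Real.pi) else 0) x).toNNReal : ℝ≥0∞)) from rfl,
    integral_withDensity_eq_integral_smul hg.real_toNNReal (fun x => x ^ r)]
  have key : ∀ x : ℝ, (Real.toNNReal (if x ∈ Set.Icc (-2:ℝ) 2 then
        Real.sqrt (4 - x ^ 2) / (2 * Real.pi) else 0) : ℝ≥0) • x ^ r
      = Set.indicator (Set.Icc (-2:ℝ) 2)
          (fun x => (Real.sqrt (4 - x ^ 2) * x ^ r) * (2 * Real.pi)⁻¹) x := by
    intro x
    rw [NNReal.smul_def, smul_eq_mul, Real.coe_toNNReal']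
    by_cases hx : x ∈ Set.Icc (-2:ℝ) 2
    · rw [if_pos hx, Set.indicator_of_mem hx, max_eq_left (by positivity)]
      ring
    · rw [if_neg hx, Set.indicator_of_notMem hx]
      simp
  simp only [key]
  rw [MeasureTheory.integral_indicator measurableSet_Icc,
    MeasureTheory.integral_Icc_eq_integral_Ioc,
    ← intervalIntegral.integral_of_le (by norm_num : (-2:ℝ) ≤ 2),
    intervalIntegral.integral_mul_const]
  rw [div_eq_mul_inv]
  rfl

lemma Jsc_zero : Jsc 0 = 2 * Real.pi := by
  have key : ∀ x : ℝ, Real.sqrt (4 - (2*x) ^ 2) = 2 * Real.sqrt (1 - x ^ 2) := by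
    intro x
    rw [show 4 - (2*x) ^ 2 = 2 ^ 2 * (1 - x ^ 2) by ring,
      Real.sqrt_mul (by positivity), Real.sqrt_sq (by norm_num)]
  have h := intervalIntegral.smul_integral_comp_mul_left
    (a := (-1:ℝ)) (b := 1) (fun x => Real.sqrt (4 - x ^ 2)) 2
  simp only [key] at h
  rw [intervalIntegral.integral_const_mul, integral_sqrt_one_sub_sq] at h
  unfold Jsc
  simp only [pow_zero, mul_one]
  rw [show (2:ℝ) * (-1) = -2 by norm_num, show (2:ℝ) * 1 = 2 by norm_num] at h
  rw [← h]
  simp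
  ring

lemma Jsc_odd (n : ℕ) : Jsc (2*n+1) = 0 := by
  have h := intervalIntegral.integral_comp_neg (a := (-2:ℝ)) (b := 2)
    (f := fun x => Real.sqrt (4 - x ^ 2) * x ^ (2*n+1))
  have key : ∀ x : ℝ, Real.sqrt (4 - (-x) ^ 2) * (-x) ^ (2*n+1)
      = -(Real.sqrt (4 - x ^ 2) * x ^ (2*n+1)) := by
    intro x
    have h1 : (-x:ℝ) ^ 2 = x ^ 2 := by ring
    have h2 : (-x:ℝ) ^ (2*n+1) = -(x ^ (2*n+1)) := Odd.neg_pow ⟨n, by ring⟩ x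
    rw [h1, h2]
    ring
  simp only [key, intervalIntegral.integral_neg, neg_neg] at h
  have h2 : -Jsc (2*n+1) = Jsc (2*n+1) := h
  linarith

lemma Jsc_rec (r : ℕ) : ((r:ℝ)+4) * Jsc (r+2) = 4*((r:ℝ)+1) * Jsc r := by
  set F : ℝ → ℝ := fun x => (4 - x ^ 2) * Real.sqrt (4 - x ^ 2) * x ^ (r+1) with hF
  set f' : ℝ → ℝ := fun x => 4*((r:ℝ)+1) * (Real.sqrt (4 - x ^ 2) * x ^ r)
      - ((r:ℝ)+4) * (Real.sqrt (4 - x ^ 2) * x ^ (r+2)) with hf'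
  have hcont : ContinuousOn F (Set.Icc (-2:ℝ) 2) := by
    apply Continuous.continuousOn
    exact (((continuous_const.sub (continuous_pow 2)).mul
      (Real.continuous_sqrt.comp (continuous_const.sub (continuous_pow 2)))).mul
      (continuous_pow (r+1)))
  have hderiv : ∀ x ∈ Set.Ioo (-2:ℝ) 2, HasDerivAt F (f' x) x := by
    intro x hx
    have hv : (0:ℝ) < 4 - x ^ 2 := by nlinarith [hx.1, hx.2]
    have hs : Real.sqrt (4 - x ^ 2) ≠ 0 := by positivity
    have h1 : HasDerivAt (fun x : ℝ => 4 - x ^ 2) (-(2*x)) x := by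
      simpa using ((hasDerivAt_pow 2 x).const_sub 4)
    have h2 : HasDerivAt (fun x : ℝ => Real.sqrt (4 - x ^ 2))
        (1 / (2 * Real.sqrt (4 - x ^ 2)) * (-(2*x))) x :=
      (Real.hasDerivAt_sqrt (ne_of_gt hv)).comp x h1
    have h3 := (h1.mul h2).mul (hasDerivAt_pow (r+1) x)
    refine h3.congr_deriv ?_
    show _ = 4*((r:ℝ)+1) * (Real.sqrt (4 - x ^ 2) * x ^ r) - ((r:ℝ)+4) * (Real.sqrt (4 - x ^ 2) * x ^ (r+2))
    have hss : Real.sqrt (4 - x ^ 2) * Real.sqrt (4 - x ^ 2) = 4 - x ^ 2 :=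
      Real.mul_self_sqrt hv.le
    have hterm : (4 - x ^ 2) * (1 / (2 * Real.sqrt (4 - x ^ 2)) * -(2*x))
        = -x * Real.sqrt (4 - x ^ 2) := by
      nth_rewrite 1 [← hss]
      field_simp
    rw [hterm]
    simp only [Nat.add_sub_cancel, Pi.mul_apply]
    push_cast
    ring
  have hint : IntervalIntegrable f' volume (-2) 2 := by
    apply Continuous.intervalIntegrable
    apply Continuous.sub
    · exact continuous_const.mul ((Real.continuous_sqrt.comp
        (continuous_const.sub (continuous_pow 2))).mul (continuous_pow r))
    · exact continuous_const.mul ((Real.continuous_sqrt.comp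
        (continuous_const.sub (continuous_pow 2))).mul (continuous_pow (r+2)))
  have hFTC := intervalIntegral.integral_eq_sub_of_hasDerivAt_of_le
    (by norm_num : (-2:ℝ) ≤ 2) hcont hderiv hint
  have hF2 : F 2 = 0 := by norm_num [hF]
  have hFm2 : F (-2) = 0 := by norm_num [hF]
  rw [hF2, hFm2, sub_zero] at hFTC
  have hsplit : ∫ x in (-2:ℝ)..2, f' x
      = 4*((r:ℝ)+1) * Jsc r - ((r:ℝ)+4) * Jsc (r+2) := by
    simp only [hf']
    rw [intervalIntegral.integral_sub, intervalIntegral.integral_const_mul,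
      intervalIntegral.integral_const_mul]
    · rfl
    · exact (continuous_const.mul ((Real.continuous_sqrt.comp
        (continuous_const.sub (continuous_pow 2))).mul (continuous_pow r))).intervalIntegrable _ _
    · exact (continuous_const.mul ((Real.continuous_sqrt.comp
        (continuous_const.sub (continuous_pow 2))).mul (continuous_pow (r+2)))).intervalIntegrable _ _
  rw [hsplit] at hFTC
  linarith


lemma bin_rec (t : ℕ) : (2*(t:ℝ)+4) * B (2*t+2) 0 = (8*(t:ℝ)+4) * B (2*t) 0 := by
  rw [B_eq_bb (2*t) 0 (by omega) (by omega), B_eq_bb (2*t+2) 0 (by omega) (by omega)]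
  simp only [Nat.sub_zero]
  rw [show (2*t)/2 = t by omega, show (2*t+2)/2 = t+1 by omega]
  unfold bb
  rcases Nat.eq_zero_or_pos t with rfl | ht
  · norm_num [Nat.choose]
  · rw [if_neg (by omega : ¬ (t + 1 = 0)), if_neg (by omega : ¬ (t = 0))]
    simp only [Nat.add_sub_cancel]
    have e1 : ((t:ℝ)+1) * ((2*t).choose (t-1) : ℝ) = (t:ℝ) * ((2*t).choose t : ℝ) := by
      have h := Nat.choose_succ_right_eq (2*t) (t-1)
      rw [show t - 1 + 1 = t by omega, show 2*t - (t-1) = t+1 by omega] at h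
      have := congrArg (Nat.cast : ℕ → ℝ) h
      push_cast at this
      linarith
    have e2 : ((t:ℝ)+1) * ((2*t+2).choose (t+1) : ℝ) = (4*(t:ℝ)+2) * ((2*t).choose t : ℝ) := by
      have h := Nat.succ_mul_centralBinom_succ t
      simp only [Nat.centralBinom] at h
      rw [show 2*(t+1) = 2*t+2 by omega] at h
      have := congrArg (Nat.cast : ℕ → ℝ) h
      push_cast at this
      linarith
    have e3 : ((t:ℝ)+2) * ((2*t+2).choose t : ℝ) = ((t:ℝ)+1) * ((2*t+2).choose (t+1) : ℝ) := by
      have h := Nat.choose_succ_right_eq (2*t+2) t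
      rw [show 2*t+2 - t = t+2 by omega] at h
      have := congrArg (Nat.cast : ℕ → ℝ) h
      push_cast at this
      linarith
    have ht1 : ((t:ℝ)+1) ≠ 0 := by positivity
    apply mul_left_cancel₀ ht1
    linear_combination (8*(t:ℝ)+4) * e1 + 2 * e2 - 2*((t:ℝ)+1) * e3

lemma mSC_eq_B (n : ℕ) : mSC n = B n 0 := by
  rcases Nat.even_or_odd n with ⟨t, rfl⟩ | ⟨t, rfl⟩
  · rw [show t + t = 2 * t by ring]
    induction t with
    | zero =>
      rw [show 2*0 = 0 by norm_num, mSC_eq_J, Jsc_zero]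
      show _ = (1:ℝ)
      field_simp
    | succ t ih =>
      have hrec := Jsc_rec (2*t)
      have hbr := bin_rec t
      have hpi : (2*Real.pi) ≠ 0 := by positivity
      have h24 : (2*(t:ℝ)+4) ≠ 0 := by positivity
      rw [show 2*(t+1) = 2*t+2 by ring, mSC_eq_J]
      rw [mSC_eq_J] at ih
      have hcast : ((2*t : ℕ):ℝ) = 2*(t:ℝ) := by push_cast; ring
      rw [show (2*t+2) = (2*t)+2 from rfl]
      rw [hcast] at hrec
      -- hrec : (2t+4) * Jsc(2t+2) = 4*(2t+1)*Jsc(2t)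
      -- ih : Jsc (2t) / (2π) = B (2t) 0
      -- hbr : (2t+4) * B(2t+2) 0 = (8t+4) * B(2t) 0
      have : Jsc (2*t+2) = (8*(t:ℝ)+4) * (Jsc (2*t)) / (2*(t:ℝ)+4) := by
        field_simp
        linarith
      rw [this, div_div]
      have h2 : B (2*t+2) 0 = (8*(t:ℝ)+4) * B (2*t) 0 / (2*(t:ℝ)+4) := by
        field_simp
        linarith
      rw [h2, ← ih]
      have hpine : Real.pi ≠ 0 := Real.pi_ne_zero
      rw [mul_div_assoc', div_div]
      rw [div_eq_div_iff (by positivity) (by positivity)]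
      ring
  · -- odd
    rw [mSC_eq_J, Jsc_odd]
    rw [B_zero_of_odd (2*t+1) 0 (by omega)]
    norm_num

lemma DGauss_eq_B (k : ℕ) (i j : Fin k) : DGauss k i j = B (i.1+1) (j.1+1) := by
  unfold DGauss
  by_cases h : j.1 ≤ i.1 ∧ (i.1 + j.1) % 2 = 0
  · rw [if_pos h]
    obtain ⟨hji, hpar⟩ := h
    rw [B_eq_bb (i.1+1) (j.1+1) (by omega) (by omega)]
    have hq2 : (((i.1:ℤ)+1) - ((j.1:ℤ)+1))/2 = (((i.1 + 1 - (j.1 + 1))/2 : ℕ) : ℤ) := by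
      omega
    rw [hq2]
    unfold chooseZ bb
    rw [if_pos (by positivity : (0:ℤ) ≤ ((_ : ℕ) : ℤ)), Int.toNat_natCast]
    rcases eq_or_ne ((i.1 + 1 - (j.1 + 1))/2) 0 with hq0 | hq0
    · rw [hq0, if_pos rfl]
      norm_num
    · rw [if_neg hq0]
      have h1 : (((i.1 + 1 - (j.1 + 1))/2 : ℕ) : ℤ) - 1
          = (((i.1 + 1 - (j.1 + 1))/2 - 1 : ℕ) : ℤ) := by omega
      rw [h1, if_pos (by positivity), Int.toNat_natCast]
  · rw [if_neg h]
    rcases Nat.lt_or_ge i.1 j.1 with h1 | h1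
    · exact (B_zero_of_gt _ _ (by omega)).symm
    · have hpar : (i.1 + j.1) % 2 ≠ 0 := fun hp => h ⟨h1, hp⟩
      exact (B_zero_of_odd _ _ (by omega)).symm

/-- The covariance representation for the Gaussian ensemble:
`(D_k^{(G)} (D_k^{(G)})^T)_{i,j} = m_{i+j}(ρ) − m_i(ρ)·m_j(ρ)`, where `ρ` is the
semicircle law. -/
theorem DGauss_mul_transpose_eq_semicircle_cov (k : ℕ) (hk : 1 ≤ k) (i j : Fin k) :
    (DGauss k * (DGauss k)ᵀ) i j =
      mSC ((i.1 + 1) + (j.1 + 1)) - mSC (i.1 + 1) * mSC (j.1 + 1) := by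
  rw [Matrix.mul_apply]
  simp only [Matrix.transpose_apply]
  rw [Finset.sum_congr rfl fun l _ => by rw [DGauss_eq_B k i l, DGauss_eq_B k j l]]
  rw [Fin.sum_univ_eq_sum_range (fun l => B (i.1+1) (l+1) * B (j.1+1) (l+1)) k]
  have hik : i.1 < k := i.isLt
  have hjk : j.1 < k := j.isLt
  set N := i.1 + j.1 + k + 2 with hN
  have hext : ∑ l ∈ range k, B (i.1+1) (l+1) * B (j.1+1) (l+1)
      = ∑ l ∈ range (N+1), B (i.1+1) (l+1) * B (j.1+1) (l+1) :=
    Finset.sum_subset (by intro x hx; simp at hx ⊢; omega)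
      (fun x _ hx => by
        rw [B_zero_of_gt (i.1+1) (x+1) (by simp at hx; omega), zero_mul])
  have hconv := B_conv (i.1+1) (j.1+1) N (by omega)
  rw [Finset.sum_range_succ' (fun l => B (i.1+1) l * B (j.1+1) l) (N+1)] at hconv
  rw [hext, mSC_eq_B, mSC_eq_B, mSC_eq_B]
  linarith [hconv]
end

section
/- Let σ be a probability measure on ℝ with compact support whose support is an infinite set, and let (p_k)_{k≥0} be the orthonormal polynomials of σ: p_k is a real polynomial of degree k with positive leading coefficient and ∫ p_k(x)p_l(x) σ(dx) = δ_{k,l} for all k, l ≥ 0. Let μ be a finite signed measure on ℝ with compact support and μ(ℝ) = 0, and suppose μ is NOT absolutely continuous with respect to σ. Then Σ_{k=0}^∞ (∫ p_k(x) μ(dx))² = ∞. -/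
open MeasureTheory
open scoped ENNReal NNReal

private lemma memLp_of_compact {ν : Measure ℝ} [IsFiniteMeasure ν] {M : Set ℝ}
    (hM : IsCompact M) (hν : ν Mᶜ = 0) {f : ℝ → ℝ} (hf : Continuous f) (q : ℝ≥0∞) :
    MemLp f q ν := by
  obtain ⟨C, hC⟩ := hM.exists_bound_of_continuousOn hf.continuousOn
  refine MemLp.of_bound hf.aestronglyMeasurable C ?_
  have hM' : ∀ᵐ x ∂ν, x ∈ M := by
    rw [ae_iff]
    exact hν
  filter_upwards [hM'] with x hx using hC x hx

private lemma poly_rec (p : ℕ → Polynomial ℝ)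
    (hdeg : ∀ k, (p k).natDegree = k) (hlead : ∀ k, (p k).leadingCoeff ≠ 0)
    (T : Polynomial ℝ → ℝ)
    (Tadd : ∀ u v, T (u + v) = T u + T v)
    (Tsmul : ∀ (a : ℝ) u, T (Polynomial.C a * u) = a * T u)
    (hT : ∀ k, T (p k) = 0) :
    ∀ q, T q = 0 := by
  have T0 : T 0 = 0 := by simpa using Tsmul 0 0
  suffices h : ∀ n (q : Polynomial ℝ), q.natDegree ≤ n → T q = 0 by
    intro q; exact h q.natDegree q le_rfl
  intro n
  induction n with
  | zero =>
    intro q hq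
    have hq' : q = Polynomial.C (q.coeff 0) := Polynomial.eq_C_of_natDegree_le_zero hq
    have hp0 : p 0 = Polynomial.C ((p 0).coeff 0) :=
      Polynomial.eq_C_of_natDegree_le_zero (hdeg 0).le
    have hb : (p 0).coeff 0 ≠ 0 := by
      have := hlead 0
      rwa [Polynomial.leadingCoeff, hdeg 0] at this
    have : q = Polynomial.C (q.coeff 0 / (p 0).coeff 0) * p 0 := by
      nth_rewrite 2 [hp0]
      rw [← Polynomial.C_mul, div_mul_cancel₀ _ hb, ← hq']
    rw [this, Tsmul, hT 0, mul_zero]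
  | succ n ih =>
    intro q hq
    set l := (p (n + 1)).leadingCoeff with hl
    have hl0 : l ≠ 0 := hlead (n + 1)
    have hlc : (p (n + 1)).coeff (n + 1) = l := by
      rw [hl, Polynomial.leadingCoeff, hdeg (n + 1)]
    set a := q.coeff (n + 1) with ha
    set r := q - Polynomial.C (a / l) * p (n + 1) with hr
    have hqr : q = Polynomial.C (a / l) * p (n + 1) + r := by rw [hr]; ring
    have hrc : r.coeff (n + 1) = 0 := by
      rw [hr, Polynomial.coeff_sub, Polynomial.coeff_C_mul, hlc, div_mul_cancel₀ _ hl0,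
        ← ha, sub_self]
    have hrd : r.natDegree ≤ n + 1 := by
      refine le_trans (Polynomial.natDegree_sub_le _ _) ?_
      refine max_le hq (le_trans (Polynomial.natDegree_C_mul_le _ _) (hdeg (n + 1)).le)
    have hTr : T r = 0 := by
      rcases eq_or_ne r 0 with h0 | h0
      · rw [h0]; exact T0
      · refine ih r ?_
        rcases Nat.lt_succ_iff_lt_or_eq.mp (Nat.lt_succ_of_le hrd) with h | h
        · exact Nat.lt_succ_iff.mp h
        · exfalso
          have : r.leadingCoeff = 0 := by
            rw [Polynomial.leadingCoeff, h, hrc]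
          exact h0 (Polynomial.leadingCoeff_eq_zero.mp this)
    rw [hqr, Tadd, Tsmul, hT (n + 1), mul_zero, hTr, add_zero]

private lemma poly_approx {R : ℝ} {f : ℝ → ℝ} (hf : Continuous f) {ε : ℝ} (hε : 0 < ε) :
    ∃ q : Polynomial ℝ, ∀ x ∈ Set.Icc (-R) R, |f x - q.eval x| ≤ ε := by
  set X : Set ℝ := Set.Icc (-R) R
  set f' : C(X, ℝ) := ⟨fun x => f x, hf.comp continuous_subtype_val⟩
  have hf' : f' ∈ closure ((polynomialFunctions X : Set C(X, ℝ))) := by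
    rw [← Subalgebra.topologicalClosure_coe, polynomialFunctions_closure_eq_top]
    trivial
  obtain ⟨b, hb, hdist⟩ := Metric.mem_closure_iff.mp hf' ε hε
  rw [polynomialFunctions_coe] at hb
  obtain ⟨q, rfl⟩ := hb
  refine ⟨q, fun x hx => ?_⟩
  have := ContinuousMap.dist_apply_le_dist (f := f') (g := q.toContinuousMapOnAlgHom X) ⟨x, hx⟩
  rw [Polynomial.toContinuousMapOnAlgHom_apply] at this
  have h2 : dist (f' ⟨x, hx⟩) ((q.toContinuousMapOn X) ⟨x, hx⟩) ≤ ε := le_of_lt (lt_of_le_of_lt this hdist)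
  simpa [Real.dist_eq, f', Polynomial.toContinuousMapOn, Polynomial.toContinuousMap] using h2


/-- The integral `∫ f dμ` of a function against a signed measure `μ`, defined via the
Jordan decomposition `μ = μ⁺ − μ⁻`. -/
noncomputable def signedIntegral (μ : SignedMeasure ℝ) (f : ℝ → ℝ) : ℝ :=
  (∫ x, f x ∂μ.toJordanDecomposition.posPart) - ∫ x, f x ∂μ.toJordanDecomposition.negPart

/-- The topological support of a measure `σ` on `ℝ`: points all of whose
neighbourhoods have positive measure. -/
def measSupport (σ : Measure ℝ) : Set ℝ :=
  {x : ℝ | ∀ U ∈ nhds x, 0 < σ U}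

/-- Divergence part of Lemma 4.2: if `σ` is a compactly supported probability measure
with infinite support, `(p_k)` are its orthonormal polynomials, and `μ` is a compactly
supported signed measure with `μ(ℝ) = 0` which is NOT absolutely continuous with
respect to `σ`, then `Σ_k (∫ p_k dμ)² = ∞`. -/
theorem sum_sq_integral_orthonormal_eq_top_of_not_absolutelyContinuous
    (σ : Measure ℝ) [IsProbabilityMeasure σ]
    (K : Set ℝ) (hK : IsCompact K) (hσK : σ Kᶜ = 0)
    (hinf : (measSupport σ).Infinite)
    (p : ℕ → Polynomial ℝ)
    (hdeg : ∀ k, (p k).natDegree = k)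
    (hlead : ∀ k, 0 < (p k).leadingCoeff)
    (horth : ∀ k l, ∫ x, (p k).eval x * (p l).eval x ∂σ = if k = l then 1 else 0)
    (μ : SignedMeasure ℝ)
    (L : Set ℝ) (hL : IsCompact L) (hμL : μ.restrict Lᶜ = 0)
    (hzero : μ Set.univ = 0)
    (hnac : ¬ ∀ A : Set ℝ, MeasurableSet A → σ A = 0 → μ A = 0) :
    ∑' k : ℕ, ENNReal.ofReal ((signedIntegral μ fun x => (p k).eval x) ^ 2) = ⊤ := by
  classical
  by_contra hcon
  set c : ℕ → ℝ := fun k => signedIntegral μ fun x => (p k).eval x with hc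
  -- summability of squares
  have hsum : Summable (fun k => (c k) ^ 2) := by
    have h2 : Summable (fun k => ((c k) ^ 2).toNNReal) := by
      rw [← ENNReal.tsum_coe_ne_top_iff_summable]
      exact hcon
    exact (NNReal.summable_coe.2 h2).congr fun k => Real.coe_toNNReal _ (sq_nonneg _)
  -- a compact interval M containing K and L
  obtain ⟨R₀, hR₀⟩ := (hK.union hL).isBounded.subset_closedBall (0 : ℝ)
  set R : ℝ := max R₀ 0 with hRdef
  set M : Set ℝ := Set.Icc (-R) R with hMdef
  have hMco : IsCompact M := isCompact_Icc
  have hKLM : K ∪ L ⊆ M := by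
    refine hR₀.trans ?_
    rw [Real.closedBall_eq_Icc]
    intro x hx
    simp only [Set.mem_Icc] at hx ⊢
    constructor <;> [linarith [le_max_left R₀ (0:ℝ)]; linarith [le_max_left R₀ (0:ℝ)]]
  have hσM : σ Mᶜ = 0 :=
    measure_mono_null (Set.compl_subset_compl.2 ((Set.subset_union_left).trans hKLM)) hσK
  set μp := μ.toJordanDecomposition.posPart with hμp
  set μn := μ.toJordanDecomposition.negPart with hμn
  haveI : IsFiniteMeasure μp := by rw [hμp]; infer_instance
  haveI : IsFiniteMeasure μn := by rw [hμn]; infer_instance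
  -- supports of μp, μn
  have hμB : ∀ B : Set ℝ, MeasurableSet B → B ⊆ Lᶜ → μ B = 0 := by
    intro B hB hBL
    have h := congrArg (fun v : VectorMeasure ℝ ℝ => v B) hμL
    simp only [VectorMeasure.zero_apply] at h
    rwa [VectorMeasure.restrict_apply μ hL.isClosed.measurableSet.compl hB,
      Set.inter_eq_left.2 hBL] at h
  have hMLc : Mᶜ ⊆ Lᶜ :=
    Set.compl_subset_compl.2 ((Set.subset_union_right).trans hKLM)
  obtain ⟨i, hi₁, hi₂, hi₃, hμp', hμn'⟩ := μ.toJordanDecomposition_spec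
  have hMmeas : MeasurableSet M := measurableSet_Icc
  have hμpM : μp Mᶜ = 0 := by
    have h0 : μ (i ∩ Mᶜ) = 0 := hμB _ (hi₁.inter hMmeas.compl) (Set.inter_subset_right.trans hMLc)
    rw [hμp, hμp', SignedMeasure.toMeasureOfZeroLE_apply μ hi₂ hi₁ hMmeas.compl]
    simp [h0]
  have hμnM : μn Mᶜ = 0 := by
    have h0 : μ (iᶜ ∩ Mᶜ) = 0 := hμB _ (hi₁.compl.inter hMmeas.compl) (Set.inter_subset_right.trans hMLc)
    rw [hμn, hμn', SignedMeasure.toMeasureOfLEZero_apply μ hi₃ hi₁.compl hMmeas.compl]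
    simp [h0]
  -- the orthonormal family in L²(σ)
  have hPq : ∀ q : Polynomial ℝ, MemLp (fun x => q.eval x) 2 σ := fun q =>
    memLp_of_compact hMco hσM (Polynomial.continuous q) 2
  set e : ℕ → Lp ℝ 2 σ := fun k => ((hPq (p k)).toLp _) with he
  have horthL : Orthonormal ℝ e := by
    rw [orthonormal_iff_ite]
    intro k l
    rw [MeasureTheory.L2.inner_def]
    have hcongr : ∫ a, (inner ℝ (e k a) (e l a) : ℝ) ∂σ
        = ∫ x, (p k).eval x * (p l).eval x ∂σ := by
      apply integral_congr_ae
      filter_upwards [(hPq (p k)).coeFn_toLp, (hPq (p l)).coeFn_toLp] with x h1 h2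
      simp only [he]
      rw [h1, h2]
      simp [RCLike.inner_apply, starRingEnd_apply, star_trivial, mul_comm]
    rw [hcongr, horth k l]
  -- the function g
  have hcl2 : Memℓp c 2 := by
    refine memℓp_gen ?_
    refine hsum.congr fun k => ?_
    have h2 : ((2 : ℝ≥0∞).toReal) = (2 : ℝ) := by norm_num
    rw [h2, Real.rpow_two]
    rw [Real.norm_eq_abs, sq_abs]
  set g0 : lp (fun _ : ℕ => ℝ) 2 := ⟨c, hcl2⟩ with hg0
  set fam := horthL.orthogonalFamily with hfam
  set gL : Lp ℝ 2 σ := fam.linearIsometry g0 with hgL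
  have hHasSum : HasSum (fun k => c k • e k) gL := by
    have h := fam.hasSum_linearIsometry g0
    simpa [LinearIsometry.toSpanSingleton_apply] using h
  have hinner : ∀ j, (inner ℝ (e j) gL : ℝ) = c j := by
    intro j
    have h2 := hHasSum.mapL (innerSL ℝ (e j))
    have h3 : (fun k => (innerSL ℝ (e j)) (c k • e k)) = fun k => if k = j then c j else 0 := by
      funext k
      rw [innerSL_apply_apply, real_inner_smul_right]
      have h4 := orthonormal_iff_ite.mp horthL j k
      rw [h4]
      by_cases h : k = j
      · subst h; simp
      · simp [h, Ne.symm h]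
    rw [h3] at h2
    exact h2.unique (hasSum_ite_eq j (c j))
  set G : ℝ → ℝ := fun x => gL x with hG
  have hG2 : MemLp G 2 σ := Lp.memLp gL
  have hGint : Integrable G σ := hG2.integrable one_le_two
  have hGmeas : StronglyMeasurable G := Lp.stronglyMeasurable gL
  -- ae membership in M
  have haeM : ∀ (ν : Measure ℝ), ν Mᶜ = 0 → ∀ᵐ x ∂ν, x ∈ M := by
    intro ν hν
    rw [ae_iff]
    exact hν
  -- integrability facts
  have hIμp : ∀ q : Polynomial ℝ, Integrable (fun x => q.eval x) μp := fun q =>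
    (memLp_of_compact hMco hμpM (Polynomial.continuous q) 1).integrable le_rfl
  have hIμn : ∀ q : Polynomial ℝ, Integrable (fun x => q.eval x) μn := fun q =>
    (memLp_of_compact hMco hμnM (Polynomial.continuous q) 1).integrable le_rfl
  have hIσG : ∀ q : Polynomial ℝ, Integrable (fun x => q.eval x * G x) σ := by
    intro q
    obtain ⟨C, hC⟩ := hMco.exists_bound_of_continuousOn (Polynomial.continuous q).continuousOn
    refine Integrable.bdd_mul (c := C) hGint (Polynomial.continuous q).aestronglyMeasurable ?_
    filter_upwards [haeM σ hσM] with x hx using hC x hx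
  -- the key identity for the orthonormal polynomials
  have key0 : ∀ j, (∫ x, (p j).eval x ∂μp) - (∫ x, (p j).eval x ∂μn)
      - ∫ x, (p j).eval x * G x ∂σ = 0 := by
    intro j
    have hj : ∫ x, (p j).eval x * G x ∂σ = c j := by
      have h1 := hinner j
      rw [MeasureTheory.L2.inner_def] at h1
      rw [← h1]
      apply integral_congr_ae
      filter_upwards [(hPq (p j)).coeFn_toLp] with x hx
      simp only [he]
      rw [hx]
      simp [RCLike.inner_apply, starRingEnd_apply, star_trivial, hG, mul_comm]
    have hcj : (∫ x, (p j).eval x ∂μp) - (∫ x, (p j).eval x ∂μn) = c j := rfl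
    rw [hj]
    rw [hcj, sub_self]
  -- extension to all polynomials
  set T : Polynomial ℝ → ℝ := fun q =>
    (∫ x, q.eval x ∂μp) - (∫ x, q.eval x ∂μn) - ∫ x, q.eval x * G x ∂σ with hT
  have key : ∀ q : Polynomial ℝ, T q = 0 := by
    refine poly_rec p hdeg (fun k => (hlead k).ne') T ?_ ?_ key0
    · intro u v
      have h3 : ∫ x, (u.eval x + v.eval x) * G x ∂σ
          = (∫ x, u.eval x * G x ∂σ) + ∫ x, v.eval x * G x ∂σ := by
        rw [← integral_add (hIσG u) (hIσG v)]
        apply integral_congr_ae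
        filter_upwards with x
        ring
      simp only [hT, Polynomial.eval_add]
      rw [integral_add (hIμp u) (hIμp v), integral_add (hIμn u) (hIμn v), h3]
      ring
    · intro a u
      simp only [hT, Polynomial.eval_mul, Polynomial.eval_C, mul_assoc]
      rw [integral_const_mul, integral_const_mul, integral_const_mul]
      ring
  -- extension to bounded continuous functions
  have keyCont : ∀ f : ℝ → ℝ, Continuous f → (∃ C, ∀ x, |f x| ≤ C) →
      (∫ x, f x ∂μp) - (∫ x, f x ∂μn) - ∫ x, f x * G x ∂σ = 0 := by
    intro f hf hCf'
    obtain ⟨Cf, hCf⟩ := hCf'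
    have hfint : ∀ (ν : Measure ℝ) [IsFiniteMeasure ν], Integrable f ν := by
      intro ν _
      refine memLp_one_iff_integrable.mp (MemLp.of_bound hf.aestronglyMeasurable Cf ?_)
      exact Filter.Eventually.of_forall fun x => by simpa [Real.norm_eq_abs] using hCf x
    have hfG : Integrable (fun x => f x * G x) σ :=
      Integrable.bdd_mul (c := Cf) hGint hf.aestronglyMeasurable
        (Filter.Eventually.of_forall fun x => by simpa [Real.norm_eq_abs] using hCf x)
    set Df : ℝ := (∫ x, f x ∂μp) - (∫ x, f x ∂μn) - ∫ x, f x * G x ∂σ with hDf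
    set B : ℝ := (μp Set.univ).toReal + (μn Set.univ).toReal + ∫ x, |G x| ∂σ with hB
    have hB0 : 0 ≤ B := by
      have h3 : 0 ≤ ∫ x, |G x| ∂σ := integral_nonneg fun x => abs_nonneg _
      have h1 : (0:ℝ) ≤ (μp Set.univ).toReal := ENNReal.toReal_nonneg
      have h2 : (0:ℝ) ≤ (μn Set.univ).toReal := ENNReal.toReal_nonneg
      rw [hB]; linarith
    have hbound : ∀ ε : ℝ, 0 < ε → |Df| ≤ ε * B := by
      intro ε hε
      obtain ⟨q, hq⟩ := poly_approx (R := R) hf hε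
      have hq0 : T q = 0 := key q
      simp only [hT] at hq0
      have hsub1 : Integrable (fun x => f x - q.eval x) μp := (hfint μp).sub (hIμp q)
      have hsub2 : Integrable (fun x => f x - q.eval x) μn := (hfint μn).sub (hIμn q)
      have hsub3 : Integrable (fun x => (f x - q.eval x) * G x) σ :=
        (hfG.sub (hIσG q)).congr (Filter.Eventually.of_forall fun x => by simp only [Pi.sub_apply]; ring)
      have hsplit : Df = (∫ x, (f x - q.eval x) ∂μp) - (∫ x, (f x - q.eval x) ∂μn)
          - ∫ x, (f x - q.eval x) * G x ∂σ := by
        rw [integral_sub (hfint μp) (hIμp q), integral_sub (hfint μn) (hIμn q)]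
        have h5 : ∫ x, (f x - q.eval x) * G x ∂σ
            = (∫ x, f x * G x ∂σ) - ∫ x, q.eval x * G x ∂σ := by
          rw [← integral_sub hfG (hIσG q)]
          apply integral_congr_ae
          filter_upwards with x
          ring
        rw [h5, hDf]
        linarith
      have h1 : |∫ x, (f x - q.eval x) ∂μp| ≤ ε * (μp Set.univ).toReal := by
        have h1a : |∫ x, (f x - q.eval x) ∂μp| ≤ ∫ x, |f x - q.eval x| ∂μp := by
          simpa [Real.norm_eq_abs] using
            norm_integral_le_integral_norm (μ := μp) (fun x => f x - q.eval x)
        refine h1a.trans ?_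
        calc ∫ x, |f x - q.eval x| ∂μp ≤ ∫ _, ε ∂μp := by
              refine integral_mono_ae hsub1.abs (integrable_const ε) ?_
              filter_upwards [haeM μp hμpM] with x hx using hq x hx
          _ = (μp Set.univ).toReal • ε := integral_const ε
          _ = ε * (μp Set.univ).toReal := by rw [smul_eq_mul]; ring
      have h2 : |∫ x, (f x - q.eval x) ∂μn| ≤ ε * (μn Set.univ).toReal := by
        have h2a : |∫ x, (f x - q.eval x) ∂μn| ≤ ∫ x, |f x - q.eval x| ∂μn := by
          simpa [Real.norm_eq_abs] using
            norm_integral_le_integral_norm (μ := μn) (fun x => f x - q.eval x)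
        refine h2a.trans ?_
        calc ∫ x, |f x - q.eval x| ∂μn ≤ ∫ _, ε ∂μn := by
              refine integral_mono_ae hsub2.abs (integrable_const ε) ?_
              filter_upwards [haeM μn hμnM] with x hx using hq x hx
          _ = (μn Set.univ).toReal • ε := integral_const ε
          _ = ε * (μn Set.univ).toReal := by rw [smul_eq_mul]; ring
      have h3 : |∫ x, (f x - q.eval x) * G x ∂σ| ≤ ε * ∫ x, |G x| ∂σ := by
        have h3a : |∫ x, (f x - q.eval x) * G x ∂σ| ≤ ∫ x, |(f x - q.eval x) * G x| ∂σ := by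
          simpa [Real.norm_eq_abs, abs_mul] using
            norm_integral_le_integral_norm (μ := σ) (fun x => (f x - q.eval x) * G x)
        refine h3a.trans ?_
        calc ∫ x, |(f x - q.eval x) * G x| ∂σ ≤ ∫ x, ε * |G x| ∂σ := by
              refine integral_mono_ae hsub3.abs (hGint.abs.const_mul ε) ?_
              filter_upwards [haeM σ hσM] with x hx
              rw [abs_mul]
              exact mul_le_mul_of_nonneg_right (hq x hx) (abs_nonneg _)
          _ = ε * ∫ x, |G x| ∂σ := integral_const_mul ε _
      have htri : |Df| ≤ |∫ x, (f x - q.eval x) ∂μp| + |∫ x, (f x - q.eval x) ∂μn|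
          + |∫ x, (f x - q.eval x) * G x ∂σ| := by
        rw [hsplit, sub_eq_add_neg, sub_eq_add_neg]
        refine (abs_add_three _ _ _).trans ?_
        simp [abs_neg]
      rw [hB]
      calc |Df| ≤ _ := htri
        _ ≤ ε * (μp Set.univ).toReal + ε * (μn Set.univ).toReal + ε * ∫ x, |G x| ∂σ := by
            linarith
        _ = ε * ((μp Set.univ).toReal + (μn Set.univ).toReal + ∫ x, |G x| ∂σ) := by ring
    have habs : |Df| ≤ 0 := by
      by_contra hcon2
      push_neg at hcon2
      have hεpos : 0 < |Df| / (B + 1) := div_pos hcon2 (by linarith)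
      have h6 := hbound (|Df| / (B + 1)) hεpos
      have h7 : |Df| / (B + 1) * B < |Df| := by
        rw [div_mul_eq_mul_div, div_lt_iff₀ (by linarith)]
        nlinarith
      linarith
    have : Df = 0 := abs_eq_zero.mp (le_antisymm habs (abs_nonneg _))
    rw [hDf] at this
    exact this
  -- the two positive measures
  push_neg at hnac
  obtain ⟨A, hA, hσA, hμA⟩ := hnac
  set Gm : ℝ → ℝ := fun x => max (-G x) 0 with hGmdef
  set Gp : ℝ → ℝ := fun x => max (G x) 0 with hGpdef
  have hGm0 : ∀ x, 0 ≤ Gm x := fun x => le_max_right _ _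
  have hGp0 : ∀ x, 0 ≤ Gp x := fun x => le_max_right _ _
  have hGmabs : ∀ x, Gm x ≤ |G x| := fun x => max_le (neg_le_abs _) (abs_nonneg _)
  have hGpabs : ∀ x, Gp x ≤ |G x| := fun x => max_le (le_abs_self _) (abs_nonneg _)
  have hGmmeas : Measurable Gm := hGmeas.measurable.neg.max measurable_const
  have hGpmeas : Measurable Gp := hGmeas.measurable.max measurable_const
  have hGmInt : Integrable Gm σ := by
    refine Integrable.mono' hGint.abs hGmmeas.aestronglyMeasurable ?_
    filter_upwards with x
    rw [Real.norm_eq_abs, abs_of_nonneg (hGm0 x)]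
    exact hGmabs x
  have hGpInt : Integrable Gp σ := by
    refine Integrable.mono' hGint.abs hGpmeas.aestronglyMeasurable ?_
    filter_upwards with x
    rw [Real.norm_eq_abs, abs_of_nonneg (hGp0 x)]
    exact hGpabs x
  have hGmE : Measurable fun x => ENNReal.ofReal (Gm x) :=
    ENNReal.measurable_ofReal.comp hGmmeas
  have hGpE : Measurable fun x => ENNReal.ofReal (Gp x) :=
    ENNReal.measurable_ofReal.comp hGpmeas
  have hfinwd : ∀ (h : ℝ → ℝ), (∀ x, h x ≤ |G x|) →
      IsFiniteMeasure (σ.withDensity fun x => ENNReal.ofReal (h x)) := by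
    intro h hh
    constructor
    rw [withDensity_apply _ MeasurableSet.univ, Measure.restrict_univ]
    calc ∫⁻ x, ENNReal.ofReal (h x) ∂σ ≤ ∫⁻ x, ‖G x‖₊ ∂σ := by
          apply lintegral_mono
          intro x
          show ENNReal.ofReal (h x) ≤ (‖G x‖₊ : ℝ≥0∞)
          rw [← ENNReal.ofReal_coe_nnreal, coe_nnnorm, Real.norm_eq_abs]
          exact ENNReal.ofReal_le_ofReal (hh x)
      _ < ⊤ := hGint.2
  haveI hw1 : IsFiniteMeasure (σ.withDensity fun x => ENNReal.ofReal (Gm x)) := hfinwd Gm hGmabs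
  haveI hw2 : IsFiniteMeasure (σ.withDensity fun x => ENNReal.ofReal (Gp x)) := hfinwd Gp hGpabs
  set ν₁ : Measure ℝ := μp + σ.withDensity (fun x => ENNReal.ofReal (Gm x)) with hν₁
  set ν₂ : Measure ℝ := μn + σ.withDensity (fun x => ENNReal.ofReal (Gp x)) with hν₂
  haveI : IsFiniteMeasure ν₁ := by rw [hν₁]; infer_instance
  have hνeq : ν₁ = ν₂ := by
    apply ext_of_forall_lintegral_eq_of_IsFiniteMeasure
    intro f
    set f0 : ℝ → ℝ := fun x => (f x : ℝ) with hf0def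
    have hf0c : Continuous f0 := NNReal.continuous_coe.comp f.continuous
    have hf0nn : ∀ x, 0 ≤ f0 x := fun x => (f x).coe_nonneg
    obtain ⟨Cb, hCb⟩ := f.bounded
    have hf0b : ∀ x, |f0 x| ≤ Cb + f0 0 := by
      intro x
      rw [abs_of_nonneg (hf0nn x)]
      have h8 := hCb x 0
      have h9 : dist (f0 x) (f0 0) ≤ Cb := by
        rw [hf0def]
        simpa [NNReal.dist_eq, Real.dist_eq] using h8
      rw [Real.dist_eq] at h9
      have := le_abs_self (f0 x - f0 0)
      linarith
    have hf0meas : Measurable fun x => ((f x : ℝ≥0) : ℝ≥0∞) :=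
      measurable_coe_nnreal_ennreal.comp f.continuous.measurable
    have hf0int : ∀ (ν : Measure ℝ) [IsFiniteMeasure ν], Integrable f0 ν := by
      intro ν _
      refine memLp_one_iff_integrable.mp (MemLp.of_bound hf0c.aestronglyMeasurable (Cb + f0 0) ?_)
      exact Filter.Eventually.of_forall fun x => by simpa [Real.norm_eq_abs] using hf0b x
    have hprod : ∀ (h : ℝ → ℝ), Integrable h σ → Measurable h →
        Integrable (fun x => h x * f0 x) σ := by
      intro h hint hmeas
      refine (Integrable.bdd_mul hint hf0c.aestronglyMeasurable (c := Cb + f0 0) (Filter.Eventually.of_forall fun x => by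
        simpa [Real.norm_eq_abs] using hf0b x)).congr ?_
      exact Filter.Eventually.of_forall fun x => mul_comm _ _
    have hGmf0 : Integrable (fun x => Gm x * f0 x) σ := hprod Gm hGmInt hGmmeas
    have hGpf0 : Integrable (fun x => Gp x * f0 x) σ := hprod Gp hGpInt hGpmeas
    have e1 : ∀ (ν : Measure ℝ) [IsFiniteMeasure ν],
        ∫⁻ x, (f x : ℝ≥0∞) ∂ν = ENNReal.ofReal (∫ x, f0 x ∂ν) := by
      intro ν _
      rw [ofReal_integral_eq_lintegral_ofReal (hf0int ν)
        (Filter.Eventually.of_forall hf0nn)]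
      exact lintegral_congr fun x => ENNReal.ofReal_coe_nnreal.symm
    have e2 : ∀ (h : ℝ → ℝ), (∀ x, 0 ≤ h x) → Measurable h → Integrable (fun x => h x * f0 x) σ →
        ∫⁻ x, ENNReal.ofReal (h x) * ((f x : ℝ≥0) : ℝ≥0∞) ∂σ
          = ENNReal.ofReal (∫ x, h x * f0 x ∂σ) := by
      intro h hh hmeas hint
      rw [ofReal_integral_eq_lintegral_ofReal hint
        (Filter.Eventually.of_forall fun x => mul_nonneg (hh x) (hf0nn x))]
      refine lintegral_congr fun x => ?_
      rw [ENNReal.ofReal_mul (hh x), ENNReal.ofReal_coe_nnreal]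
    rw [hν₁, hν₂, lintegral_add_measure, lintegral_add_measure,
      lintegral_withDensity_eq_lintegral_mul σ hGmE hf0meas,
      lintegral_withDensity_eq_lintegral_mul σ hGpE hf0meas]
    have e3 : ∫⁻ x, ((fun x => ENNReal.ofReal (Gm x)) * fun x => ((f x : ℝ≥0) : ℝ≥0∞)) x ∂σ
        = ENNReal.ofReal (∫ x, Gm x * f0 x ∂σ) := by
      rw [← e2 Gm hGm0 hGmmeas hGmf0]
      rfl
    have e4 : ∫⁻ x, ((fun x => ENNReal.ofReal (Gp x)) * fun x => ((f x : ℝ≥0) : ℝ≥0∞)) x ∂σ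
        = ENNReal.ofReal (∫ x, Gp x * f0 x ∂σ) := by
      rw [← e2 Gp hGp0 hGpmeas hGpf0]
      rfl
    rw [e1 μp, e1 μn, e3, e4,
      ← ENNReal.ofReal_add (integral_nonneg hf0nn)
        (integral_nonneg fun x => mul_nonneg (hGm0 x) (hf0nn x)),
      ← ENNReal.ofReal_add (integral_nonneg hf0nn)
        (integral_nonneg fun x => mul_nonneg (hGp0 x) (hf0nn x))]
    congr 1
    have hKey := keyCont f0 hf0c ⟨Cb + f0 0, hf0b⟩
    have hdiff : (∫ x, Gp x * f0 x ∂σ) - ∫ x, Gm x * f0 x ∂σ = ∫ x, f0 x * G x ∂σ := by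
      rw [← integral_sub hGpf0 hGmf0]
      apply integral_congr_ae
      filter_upwards with x
      rw [hGpdef, hGmdef]
      simp only
      rcases le_total (G x) 0 with h | h
      · rw [max_eq_right h, max_eq_left (by linarith : (0:ℝ) ≤ -G x)]
        ring
      · rw [max_eq_left h, max_eq_right (by linarith : -G x ≤ (0:ℝ))]
        ring
    linarith
  -- evaluate at A
  have h1 := congrArg (fun ν : Measure ℝ => ν A) hνeq
  simp only [hν₁, hν₂, Measure.add_apply] at h1
  have hres : σ.restrict A = 0 := Measure.restrict_eq_zero.mpr hσA
  rw [withDensity_apply _ hA, withDensity_apply _ hA, hres] at h1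
  simp only [lintegral_zero_measure, add_zero] at h1
  have h2 : μ A = (μp A).toReal - (μn A).toReal := by
    conv_lhs => rw [← μ.toSignedMeasure_toJordanDecomposition]
    rw [JordanDecomposition.toSignedMeasure, VectorMeasure.sub_apply,
      Measure.toSignedMeasure_apply_measurable hA, Measure.toSignedMeasure_apply_measurable hA]
    rfl
  exact hμA (by rw [h2, h1, sub_self])
end

section
/- Define the generalised Catalan numbers d_{i,j} = C(i+j, i) − C(i+j, i−1) for natural numbers i ≤ j, with C(n,−1) = 0. Then for all natural numbers i ≤ j: Σ_{r=0}^{i} d_{i−r, i+r} · d_{j−r, j+r} = d_{i+j, i+j}. -/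
/-- The generalised Catalan number `d_{i,j} = C(i+j, i) − C(i+j, i−1)`,
with the convention `C(n, −1) = 0` (relevant for `i = 0`). -/
def genCatalan (i j : ℕ) : ℤ :=
  ((i + j).choose i : ℤ) - if i = 0 then 0 else ((i + j).choose (i - 1) : ℤ)

lemma genCat_eq (i r : ℕ) (h : r ≤ i) :
    genCatalan (i - r) (i + r) =
      ((2 * i).choose (i + r) : ℤ) - ((2 * i).choose (i + r + 1) : ℤ) := by
  unfold genCatalan
  have h2 : i - r + (i + r) = 2 * i := by omega
  rw [h2]
  by_cases hr : i - r = 0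
  · have hri : r = i := by omega
    subst hri
    rw [if_pos hr, hr]
    have c1 : (2 * r).choose (r + r) = 1 := by
      rw [show r + r = 2 * r by ring, Nat.choose_self]
    have c2 : (2 * r).choose (r + r + 1) = 0 := Nat.choose_eq_zero_of_lt (by omega)
    simp [c1, c2]
  · rw [if_neg hr]
    have e2 : i - r - 1 = 2 * i - (i + r + 1) := by omega
    have e1 : i - r = 2 * i - (i + r) := by omega
    rw [e2, e1, Nat.choose_symm (by omega), Nat.choose_symm (by omega)]

lemma vanderL1 (i j : ℕ) (hij : i ≤ j) :
    ∑ r ∈ Finset.range (i + 1),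
      ((2 * i).choose (i + r) * (2 * j).choose (j + r) +
        (2 * i).choose (i + r + 1) * (2 * j).choose (j + r + 1)) =
      (2 * i + 2 * j).choose (i + j) := by
  have e1 : ∑ r ∈ Finset.range (i + 1), (2 * i).choose (i + r) * (2 * j).choose (j + r)
      = ∑ a ∈ Finset.Ico i (i + j + 1), (2 * i).choose a * (2 * j).choose (i + j - a) := by
    rw [Finset.sum_Ico_eq_sum_range, show i + j + 1 - i = j + 1 by omega]
    rw [Finset.sum_subset (Finset.range_subset_range.mpr (show i + 1 ≤ j + 1 by omega))
      (fun r _ hnr => by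
        rw [Nat.choose_eq_zero_of_lt (show 2 * i < i + r by
          simp only [Finset.mem_range, not_lt] at hnr; omega), zero_mul])]
    refine Finset.sum_congr rfl fun r hr => ?_
    have hrj : r ≤ j := by simpa [Nat.lt_succ_iff] using hr
    rw [show i + j - (i + r) = 2 * j - (j + r) by omega, Nat.choose_symm (by omega)]
  have e2 : ∑ r ∈ Finset.range (i + 1), (2 * i).choose (i + r + 1) * (2 * j).choose (j + r + 1)
      = ∑ a ∈ Finset.range i, (2 * i).choose a * (2 * j).choose (i + j - a) := by
    rw [Finset.sum_range_succ, Nat.choose_eq_zero_of_lt (show 2 * i < i + i + 1 by omega),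
      zero_mul, add_zero]
    conv_rhs => rw [← Finset.sum_range_reflect]
    refine Finset.sum_congr rfl fun r hr => ?_
    have hri : r < i := Finset.mem_range.mp hr
    rw [show i - 1 - r = 2 * i - (i + r + 1) by omega, Nat.choose_symm (by omega),
      show i + j - (2 * i - (i + r + 1)) = j + r + 1 by omega]
  rw [Nat.add_choose_eq, Finset.Nat.sum_antidiagonal_eq_sum_range_succ_mk,
    Finset.sum_add_distrib, e1, e2, Nat.succ_eq_add_one, Finset.range_eq_Ico (a := i + j + 1),
    ← Finset.sum_Ico_consecutive _ (Nat.zero_le i) (show i ≤ i + j + 1 by omega),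
    ← Finset.range_eq_Ico]
  exact add_comm _ _

lemma vanderL2 (i j : ℕ) (h1 : 1 ≤ i) (hij : i ≤ j) :
    ∑ r ∈ Finset.range (i + 1),
      ((2 * i).choose (i + r) * (2 * j).choose (j + r + 1) +
        (2 * i).choose (i + r + 1) * (2 * j).choose (j + r)) =
      (2 * i + 2 * j).choose (i + j - 1) := by
  have e1 : ∑ r ∈ Finset.range (i + 1), (2 * i).choose (i + r) * (2 * j).choose (j + r + 1)
      = ∑ a ∈ Finset.Ico i (i + j), (2 * i).choose a * (2 * j).choose (i + j - 1 - a) := by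
    rw [Finset.sum_Ico_eq_sum_range, show i + j - i = j by omega]
    have l : ∑ r ∈ Finset.range (i + 1),
        (2 * i).choose (i + r) * (2 * j).choose (j + r + 1)
        = ∑ r ∈ Finset.range (j + i + 1),
        (2 * i).choose (i + r) * (2 * j).choose (j + r + 1) :=
      Finset.sum_subset (Finset.range_subset_range.mpr (by omega)) (fun r _ hnr => by
        rw [Nat.choose_eq_zero_of_lt (show 2 * i < i + r by
          simp only [Finset.mem_range, not_lt] at hnr; omega), zero_mul])
    have rgt : ∑ r ∈ Finset.range j,
        (2 * i).choose (i + r) * (2 * j).choose (i + j - 1 - (i + r))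
        = ∑ r ∈ Finset.range (j + i + 1),
        (2 * i).choose (i + r) * (2 * j).choose (j + r + 1) := by
      rw [← Finset.sum_subset (Finset.range_subset_range.mpr (show j ≤ j + i + 1 by omega))
        (fun r _ hnr => by
          rw [Nat.choose_eq_zero_of_lt (show 2 * j < j + r + 1 by
            simp only [Finset.mem_range, not_lt] at hnr; omega), mul_zero])]
      refine Finset.sum_congr rfl fun r hr => ?_
      have hrj : r < j := Finset.mem_range.mp hr
      rw [show i + j - 1 - (i + r) = 2 * j - (j + r + 1) by omega, Nat.choose_symm (by omega)]
    rw [l, rgt]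
  have e2 : ∑ r ∈ Finset.range (i + 1), (2 * i).choose (i + r + 1) * (2 * j).choose (j + r)
      = ∑ a ∈ Finset.range i, (2 * i).choose a * (2 * j).choose (i + j - 1 - a) := by
    rw [Finset.sum_range_succ, Nat.choose_eq_zero_of_lt (show 2 * i < i + i + 1 by omega),
      zero_mul, add_zero]
    conv_rhs => rw [← Finset.sum_range_reflect]
    refine Finset.sum_congr rfl fun r hr => ?_
    have hri : r < i := Finset.mem_range.mp hr
    rw [show i - 1 - r = 2 * i - (i + r + 1) by omega, Nat.choose_symm (by omega),
      show i + j - 1 - (2 * i - (i + r + 1)) = j + r by omega]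
  rw [Nat.add_choose_eq, Finset.Nat.sum_antidiagonal_eq_sum_range_succ_mk,
    show (i + j - 1).succ = i + j by omega,
    Finset.sum_add_distrib, e1, e2, Finset.range_eq_Ico (a := i + j),
    ← Finset.sum_Ico_consecutive _ (Nat.zero_le i) (show i ≤ i + j by omega),
    ← Finset.range_eq_Ico]
  exact add_comm _ _

/-- For all natural numbers `i ≤ j`:
`Σ_{r=0}^{i} d_{i−r, i+r} · d_{j−r, j+r} = d_{i+j, i+j}`. -/
theorem sum_genCatalan_mul_genCatalan (i j : ℕ) (hij : i ≤ j) :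
    ∑ r ∈ Finset.range (i + 1), genCatalan (i - r) (i + r) * genCatalan (j - r) (j + r) =
      genCatalan (i + j) (i + j) := by
  rcases Nat.eq_zero_or_pos i with h0 | h1
  · subst h0
    simp [Finset.sum_range_one, genCatalan]
  · have key : ∀ r ∈ Finset.range (i + 1),
        genCatalan (i - r) (i + r) * genCatalan (j - r) (j + r) =
        (((2 * i).choose (i + r) * (2 * j).choose (j + r) +
          (2 * i).choose (i + r + 1) * (2 * j).choose (j + r + 1) : ℕ) : ℤ) -
        (((2 * i).choose (i + r) * (2 * j).choose (j + r + 1) +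
          (2 * i).choose (i + r + 1) * (2 * j).choose (j + r) : ℕ) : ℤ) := by
      intro r hr
      have hri : r ≤ i := by simpa [Nat.lt_succ_iff] using hr
      rw [genCat_eq i r hri, genCat_eq j r (hri.trans hij)]
      push_cast
      ring
    rw [Finset.sum_congr rfl key, Finset.sum_sub_distrib, ← Nat.cast_sum, ← Nat.cast_sum,
      vanderL1 i j hij, vanderL2 i j h1 hij]
    unfold genCatalan
    rw [if_neg (by omega : ¬ i + j = 0), show i + j + (i + j) = 2 * i + 2 * j by ring]
end

section
/- Define the generalised Catalan numbers d_{i,j} = C(i+j, i) − C(i+j, i−1) for natural numbers i ≤ j, with C(n,−1) = 0. Then for all natural numbers i ≤ j: Σ_{r=0}^{i} d_{i−r, i+1+r} · d_{j−r, j+1+r} = d_{i+j+1, i+j+1}. -/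
open Finset

/-- Auxiliary: `D n k = 2·C(n,k) − C(n+1,k)`, an if-free form of the ballot difference. -/
def ballotD (n k : ℕ) : ℤ := 2 * (n.choose k : ℤ) - ((n + 1).choose k : ℤ)

lemma genCatalan_eq_ballotD (i j : ℕ) : genCatalan i j = ballotD (i + j) i := by
  unfold genCatalan ballotD
  rcases Nat.eq_zero_or_pos i with rfl | hi
  · simp
  · obtain ⟨m, rfl⟩ : ∃ m, i = m + 1 := ⟨i - 1, by omega⟩
    have h2 : (m + 1 + j + 1).choose (m + 1)
        = (m + 1 + j).choose m + (m + 1 + j).choose (m + 1) := Nat.choose_succ_succ _ _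
    rw [h2]
    simp only [Nat.add_sub_cancel, if_neg (Nat.succ_ne_zero m)]
    push_cast
    ring

lemma ballotD_reflect (n k : ℕ) (hk : k ≤ n + 1) : ballotD n (n + 1 - k) = -ballotD n k := by
  unfold ballotD
  rcases Nat.eq_zero_or_pos k with rfl | hk1
  · rw [Nat.sub_zero, Nat.choose_eq_zero_of_lt (by omega), Nat.choose_self]
    simp
  · obtain ⟨m, rfl⟩ : ∃ m, k = m + 1 := ⟨k - 1, by omega⟩
    have h1 : n.choose (n + 1 - (m + 1)) = n.choose m := by
      rw [show n + 1 - (m + 1) = n - m by omega, Nat.choose_symm (by omega)]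
    have h2 : (n + 1).choose (n + 1 - (m + 1)) = (n + 1).choose (m + 1) := by
      rw [show n + 1 - (m + 1) = (n + 1) - (m + 1) by omega, Nat.choose_symm hk]
    have h3 : (n + 1).choose (m + 1) = n.choose m + n.choose (m + 1) := Nat.choose_succ_succ _ _
    rw [h1, h2, h3]
    push_cast
    ring

lemma sum_choose_mul_choose (p q c N : ℕ) (hp : p < N) :
    ∑ s ∈ range N, p.choose s * q.choose (c + s) = (p + q).choose (c + p) := by
  have htrunc : ∑ s ∈ range N, p.choose s * q.choose (c + s)
      = ∑ s ∈ range (p + 1), p.choose s * q.choose (c + s) := by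
    refine (Finset.sum_subset ?_ ?_).symm
    · intro x hx; rw [mem_range] at *; omega
    · intro x _ hx
      simp only [mem_range, not_lt] at hx
      rw [Nat.choose_eq_zero_of_lt (by omega), zero_mul]
  rw [htrunc]
  have hrefl : ∑ s ∈ range (p + 1), p.choose s * q.choose (c + s)
      = ∑ s ∈ range (p + 1), p.choose s * q.choose (c + p - s) := by
    rw [← Finset.sum_range_reflect (fun t => p.choose t * q.choose (c + p - t)) (p + 1)]
    refine sum_congr rfl fun s hs => ?_
    rw [mem_range] at hs
    rw [show p + 1 - 1 - s = p - s by omega, show c + p - (p - s) = c + s by omega,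
      Nat.choose_symm (by omega)]
  rw [hrefl]
  have hext : ∑ s ∈ range (p + 1), p.choose s * q.choose (c + p - s)
      = ∑ s ∈ range (c + p + 1), p.choose s * q.choose (c + p - s) := by
    refine Finset.sum_subset ?_ ?_
    · intro x hx; rw [mem_range] at *; omega
    · intro x _ hx
      simp only [mem_range, not_lt] at hx
      rw [Nat.choose_eq_zero_of_lt (by omega), zero_mul]
  rw [hext, Nat.add_choose_eq, Finset.Nat.sum_antidiagonal_eq_sum_range_succ_mk]

lemma sum_choose_mul_choose_int (p q c N : ℕ) (hp : p < N) :
    ∑ s ∈ range N, (p.choose s : ℤ) * (q.choose (c + s) : ℤ) = ((p + q).choose (c + p) : ℤ) := by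
  have := sum_choose_mul_choose p q c N hp
  exact_mod_cast this

/-- For all natural numbers `i ≤ j`:
`Σ_{r=0}^{i} d_{i−r, i+1+r} · d_{j−r, j+1+r} = d_{i+j+1, i+j+1}`. -/
theorem sum_genCatalan_mul_genCatalan_shifted (i j : ℕ) (hij : i ≤ j) :
    ∑ r ∈ Finset.range (i + 1),
        genCatalan (i - r) (i + 1 + r) * genCatalan (j - r) (j + 1 + r) =
      genCatalan (i + j + 1) (i + j + 1) := by
  set n := i + j + 1 with hn
  set g : ℕ → ℤ := fun s => ballotD (2 * i + 1) s * ballotD (2 * j + 1) (j - i + s) with hg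
  -- Step 1: the LHS equals the sum of g over range (i+1)
  have step1 : ∑ r ∈ Finset.range (i + 1),
      genCatalan (i - r) (i + 1 + r) * genCatalan (j - r) (j + 1 + r)
      = ∑ s ∈ range (i + 1), g s := by
    rw [← Finset.sum_range_reflect g (i + 1)]
    refine sum_congr rfl fun r hr => ?_
    rw [mem_range] at hr
    rw [genCatalan_eq_ballotD, genCatalan_eq_ballotD]
    simp only [hg]
    rw [show i + 1 - 1 - r = i - r by omega,
      show i - r + (i + 1 + r) = 2 * i + 1 by omega,
      show j - r + (j + 1 + r) = 2 * j + 1 by omega,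
      show j - i + (i - r) = j - r by omega]
  -- reflection symmetry of g
  have grefl : ∀ s ≤ 2 * i + 2, g (2 * i + 2 - s) = g s := by
    intro s hs
    simp only [hg]
    have h1 : ballotD (2 * i + 1) (2 * i + 2 - s) = -ballotD (2 * i + 1) s := by
      have h := ballotD_reflect (2 * i + 1) s (by omega)
      rwa [show 2 * i + 1 + 1 = 2 * i + 2 by omega] at h
    have h2 : ballotD (2 * j + 1) (j - i + (2 * i + 2 - s))
        = -ballotD (2 * j + 1) (j - i + s) := by
      have h := ballotD_reflect (2 * j + 1) (j - i + s) (by omega)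
      rwa [show 2 * j + 1 + 1 - (j - i + s) = j - i + (2 * i + 2 - s) by omega] at h
    rw [h1, h2]
    ring
  have gmid : g (i + 1) = 0 := by
    have h1 : (2 * i + 1).choose (i + 1) = (2 * i + 1).choose i := by
      rw [← Nat.choose_symm (show i ≤ 2 * i + 1 by omega)]
      congr 1
      omega
    have h2 : (2 * i + 1 + 1).choose (i + 1)
        = (2 * i + 1).choose i + (2 * i + 1).choose (i + 1) := Nat.choose_succ_succ _ _
    have hz : ballotD (2 * i + 1) (i + 1) = 0 := by
      unfold ballotD
      rw [h1, h2, h1]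
      push_cast
      ring
    simp only [hg, hz, zero_mul]
  -- Step 2: doubling
  have step2 : ∑ s ∈ range (2 * i + 3), g s = 2 * ∑ s ∈ range (i + 1), g s := by
    have hsplit : ∑ s ∈ range (2 * i + 3), g s
        = ∑ s ∈ range (i + 1), g s + ∑ s ∈ Ico (i + 1) (2 * i + 3), g s := by
      rw [Finset.range_eq_Ico, ← Finset.sum_Ico_consecutive g (by omega) (show i + 1 ≤ 2 * i + 3 by omega), ← Finset.range_eq_Ico]
    have h2 : ∑ s ∈ Ico (i + 1) (2 * i + 3), g s = ∑ s ∈ range (i + 2), g (i + 1 + s) := by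
      rw [Finset.sum_Ico_eq_sum_range, show 2 * i + 3 - (i + 1) = i + 2 by omega]
    have h3 : ∑ s ∈ range (i + 2), g (i + 1 + s)
        = (∑ s ∈ range (i + 1), g (i + 1 + (s + 1))) + g (i + 1 + 0) :=
      Finset.sum_range_succ' _ _
    have h4 : ∑ s ∈ range (i + 1), g (i + 1 + (s + 1)) = ∑ s ∈ range (i + 1), g s := by
      rw [← Finset.sum_range_reflect g (i + 1)]
      refine sum_congr rfl fun s hs => ?_
      rw [mem_range] at hs
      have h := grefl (i + 1 - 1 - s) (by omega)
      rwa [show 2 * i + 2 - (i + 1 - 1 - s) = i + 1 + (s + 1) by omega] at h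
    rw [hsplit, h2, h3, h4, show i + 1 + 0 = i + 1 by omega, gmid]
    ring
  -- Step 3: evaluate the full-range sum by Vandermonde
  have step3 : ∑ s ∈ range (2 * i + 3), g s
      = 4 * ((2 * n).choose n : ℤ) - 2 * ((2 * n + 1).choose n : ℤ)
        - 2 * ((2 * n + 1).choose (n + 1) : ℤ) + ((2 * n + 2).choose (n + 1) : ℤ) := by
    have expand : ∀ s ∈ range (2 * i + 3), g s
        = 4 * (((2 * i + 1).choose s : ℤ) * ((2 * j + 1).choose (j - i + s) : ℤ))
          - 2 * (((2 * i + 1).choose s : ℤ) * ((2 * j + 2).choose (j - i + s) : ℤ))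
          - 2 * (((2 * i + 2).choose s : ℤ) * ((2 * j + 1).choose (j - i + s) : ℤ))
          + (((2 * i + 2).choose s : ℤ) * ((2 * j + 2).choose (j - i + s) : ℤ)) := by
      intro s _
      simp only [hg]
      unfold ballotD
      rw [show 2 * i + 1 + 1 = 2 * i + 2 by omega, show 2 * j + 1 + 1 = 2 * j + 2 by omega]
      ring
    rw [Finset.sum_congr rfl expand]
    rw [Finset.sum_add_distrib, Finset.sum_sub_distrib, Finset.sum_sub_distrib,
      ← Finset.mul_sum, ← Finset.mul_sum, ← Finset.mul_sum]
    rw [sum_choose_mul_choose_int (2 * i + 1) (2 * j + 1) (j - i) _ (by omega),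
      sum_choose_mul_choose_int (2 * i + 1) (2 * j + 2) (j - i) _ (by omega),
      sum_choose_mul_choose_int (2 * i + 2) (2 * j + 1) (j - i) _ (by omega),
      sum_choose_mul_choose_int (2 * i + 2) (2 * j + 2) (j - i) _ (by omega)]
    rw [show 2 * i + 1 + (2 * j + 1) = 2 * n by omega,
      show j - i + (2 * i + 1) = n by omega,
      show 2 * i + 1 + (2 * j + 2) = 2 * n + 1 by omega,
      show 2 * i + 2 + (2 * j + 1) = 2 * n + 1 by omega,
      show j - i + (2 * i + 2) = n + 1 by omega,
      show 2 * i + 2 + (2 * j + 2) = 2 * n + 2 by omega]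
  -- Finish
  have hrhs : genCatalan (i + j + 1) (i + j + 1) = ballotD (2 * n) n := by
    rw [genCatalan_eq_ballotD, show i + j + 1 + (i + j + 1) = 2 * n by omega]
  rw [step1, hrhs]
  have hA : ((2 * n + 1).choose (n + 1) : ℤ) = ((2 * n + 1).choose n : ℤ) := by
    have : (2 * n + 1).choose (n + 1) = (2 * n + 1).choose n := by
      rw [← Nat.choose_symm (show n ≤ 2 * n + 1 by omega)]
      congr 1
      omega
    exact_mod_cast this
  have hB : ((2 * n + 2).choose (n + 1) : ℤ)
      = ((2 * n + 1).choose n : ℤ) + ((2 * n + 1).choose (n + 1) : ℤ) := by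
    have : (2 * n + 1 + 1).choose (n + 1)
        = (2 * n + 1).choose n + (2 * n + 1).choose (n + 1) := Nat.choose_succ_succ _ _
    rw [show 2 * n + 2 = 2 * n + 1 + 1 by omega]
    exact_mod_cast this
  have h2D : (2 : ℤ) * ∑ s ∈ range (i + 1), g s = 2 * ballotD (2 * n) n := by
    rw [← step2, step3]
    unfold ballotD
    rw [show 2 * n + 1 = 2 * n + 1 by rfl]
    rw [hA, hB, hA]
    ring
  have := mul_left_cancel₀ (show (2 : ℤ) ≠ 0 by norm_num) h2D
  exact this
end

section
/- For every natural number k, the k-th moment of the Marchenko–Pastur law equals the k-th Catalan number: ∫_0^4 x^k · (√(x(4−x))/(2πx)) dx = C(2k, k) − C(2k, k−1). -/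
open MeasureTheory

/-- `Γ(k + 1/2) = (2k)! √π / (4^k k!)`. -/
lemma gamma_nat_add_half (k : ℕ) :
    Real.Gamma ((k : ℝ) + 1 / 2) =
      (Nat.factorial (2 * k) : ℝ) * Real.sqrt Real.pi / (4 ^ k * Nat.factorial k) := by
  induction k with
  | zero =>
      rw [show ((0:ℕ):ℝ) + 1 / 2 = 1 / 2 by norm_num, Real.Gamma_one_half_eq]
      simp [Nat.factorial]
  | succ n ih =>
      have h : ((n + 1 : ℕ) : ℝ) + 1 / 2 = ((n : ℝ) + 1 / 2) + 1 := by push_cast; ring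
      have hne : (n : ℝ) + 1 / 2 ≠ 0 := by positivity
      rw [h, Real.Gamma_add_one hne, ih]
      have h2 : 2 * (n + 1) = (2 * n + 1) + 1 := by ring
      rw [h2, Nat.factorial_succ, Nat.factorial_succ, Nat.factorial_succ]
      push_cast
      have h4 : (4 : ℝ) ^ (n + 1) = 4 * 4 ^ n := by ring
      have hf : (Nat.factorial n : ℝ) ≠ 0 := Nat.cast_ne_zero.mpr n.factorial_ne_zero
      have h4n : (4 : ℝ) ^ n ≠ 0 := by positivity
      rw [h4]
      field_simp
      ring

/-- The scaled Beta integral `∫₀⁴ x^(k-1/2) (4-x)^(1/2) dx = 2π (2k)!/(k!(k+1)!)`. -/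
lemma beta_eval (k : ℕ) :
    ∫ x in (0:ℝ)..4, x ^ ((k : ℝ) - 1 / 2) * (4 - x) ^ ((1 : ℝ) / 2) =
      2 * Real.pi * ((Nat.factorial (2 * k) : ℝ) /
        (Nat.factorial k * Nat.factorial (k + 1))) := by
  have h4 : (0:ℝ) < 4 := by norm_num
  have hs : (0:ℝ) < ((k : ℂ) + 1 / 2).re := by
    simp [Complex.add_re]
    positivity
  have ht : (0:ℝ) < ((3 : ℂ) / 2).re := by norm_num [Complex.div_re]
  have hbeta := Complex.Gamma_mul_Gamma_eq_betaIntegral hs ht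
  have hscaled := Complex.betaIntegral_scaled ((k : ℂ) + 1 / 2) (3 / 2) h4
  -- the complex integrand is the cast of the real one
  have hcast : (∫ x in (0:ℝ)..4, (x : ℂ) ^ (((k : ℂ) + 1 / 2) - 1) * ((4 : ℂ) - x) ^ ((3:ℂ)/2 - 1))
      = ((∫ x in (0:ℝ)..4, x ^ ((k : ℝ) - 1 / 2) * (4 - x) ^ ((1 : ℝ) / 2) : ℝ) : ℂ) := by
    have h1 : (∫ x in (0:ℝ)..4, (x : ℂ) ^ (((k : ℂ) + 1 / 2) - 1) * ((4 : ℂ) - x) ^ ((3:ℂ)/2 - 1))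
        = ∫ x in (0:ℝ)..4, ((x ^ ((k : ℝ) - 1 / 2) * (4 - x) ^ ((1 : ℝ) / 2) : ℝ) : ℂ) := by
      refine intervalIntegral.integral_congr fun x hx => ?_
      rw [Set.uIcc_of_le h4.le] at hx
      rw [Complex.ofReal_mul, Complex.ofReal_cpow hx.1, Complex.ofReal_cpow (by linarith [hx.2] : (0:ℝ) ≤ 4 - x)]
      push_cast
      congr 1
      · congr 1; ring
      · congr 1; norm_num
    rw [h1]
    exact RCLike.intervalIntegral_ofReal
  -- gamma values
  have hΓ1 : Complex.Gamma ((k : ℂ) + 1 / 2) =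
      ((Nat.factorial (2 * k) : ℝ) * Real.sqrt Real.pi / (4 ^ k * Nat.factorial k) : ℝ) := by
    rw [show ((k : ℂ) + 1 / 2) = (((k : ℝ) + 1 / 2 : ℝ) : ℂ) by push_cast; ring,
      Complex.Gamma_ofReal, gamma_nat_add_half]
  have hΓ2 : Complex.Gamma ((3:ℂ) / 2) = ((Real.sqrt Real.pi / 2 : ℝ) : ℂ) := by
    rw [show ((3:ℂ) / 2) = (((3:ℝ) / 2 : ℝ) : ℂ) by push_cast; ring, Complex.Gamma_ofReal]
    rw [show (3:ℝ)/2 = 1/2 + 1 by norm_num, Real.Gamma_add_one (by norm_num),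
      Real.Gamma_one_half_eq]
    push_cast; ring
  have hΓ3 : Complex.Gamma (((k : ℂ) + 1 / 2) + 3 / 2) = ((Nat.factorial (k + 1) : ℝ) : ℂ) := by
    rw [show ((k : ℂ) + 1 / 2) + 3 / 2 = ((k + 1 : ℕ) : ℂ) + 1 by push_cast; ring,
      Complex.Gamma_nat_eq_factorial]
    push_cast; ring
  have hΓ3ne : Complex.Gamma (((k : ℂ) + 1 / 2) + 3 / 2) ≠ 0 := by
    rw [hΓ3]
    exact_mod_cast Nat.cast_ne_zero.mpr (k + 1).factorial_ne_zero
  have hB : Complex.betaIntegral ((k : ℂ) + 1 / 2) (3 / 2) =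
      Complex.Gamma ((k : ℂ) + 1 / 2) * Complex.Gamma ((3:ℂ)/2) /
        Complex.Gamma (((k : ℂ) + 1 / 2) + 3 / 2) := by
    rw [hbeta, mul_div_cancel_left₀ _ hΓ3ne]
  have hpow : (4 : ℂ) ^ (((k : ℂ) + 1 / 2) + 3 / 2 - 1) = (((4:ℝ) ^ (k + 1) : ℝ) : ℂ) := by
    rw [show ((k : ℂ) + 1 / 2) + 3 / 2 - 1 = ((k + 1 : ℕ) : ℂ) by push_cast; ring,
      Complex.cpow_natCast]
    push_cast; ring
  simp only [Complex.ofReal_ofNat] at hscaled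
  rw [hcast, hB, hΓ1, hΓ2, hΓ3, hpow] at hscaled
  have := hscaled
  rw [← Complex.ofReal_mul, ← Complex.ofReal_div, ← Complex.ofReal_mul,
    Complex.ofReal_inj] at this
  rw [this]
  have hf : (Nat.factorial k : ℝ) ≠ 0 := Nat.cast_ne_zero.mpr k.factorial_ne_zero
  have hf1 : (Nat.factorial (k+1) : ℝ) ≠ 0 := Nat.cast_ne_zero.mpr (k+1).factorial_ne_zero
  have h4n : (4 : ℝ) ^ k ≠ 0 := by positivity
  have hsq : Real.sqrt Real.pi * Real.sqrt Real.pi = Real.pi :=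
    Real.mul_self_sqrt Real.pi_pos.le
  have h41 : (4:ℝ) ^ (k+1) = 4 * 4 ^ k := by ring
  rw [h41]
  field_simp
  linear_combination 4 * hsq

/-- The `k`-th moment of the Marchenko–Pastur law equals the `k`-th Catalan number
`C(2k, k) − C(2k, k−1)` (with the convention `C(0, −1) = 0`). -/
theorem marchenkoPastur_moment_eq_catalan (k : ℕ) :
    ∫ x in Set.Ioo (0 : ℝ) 4, x ^ k * (Real.sqrt (x * (4 - x)) / (2 * Real.pi * x)) =
      ((2 * k).choose k : ℝ) - if k = 0 then 0 else ((2 * k).choose (k - 1) : ℝ) := by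
  have h4 : (0:ℝ) < 4 := by norm_num
  have hpi : (0:ℝ) < 2 * Real.pi := by positivity
  -- rewrite the integrand on Ioo
  have hcong : ∫ x in Set.Ioo (0 : ℝ) 4, x ^ k * (Real.sqrt (x * (4 - x)) / (2 * Real.pi * x))
      = ∫ x in Set.Ioo (0 : ℝ) 4,
          x ^ ((k : ℝ) - 1 / 2) * (4 - x) ^ ((1 : ℝ) / 2) / (2 * Real.pi) := by
    refine setIntegral_congr_fun measurableSet_Ioo fun x hx => ?_
    obtain ⟨hx0, hx4⟩ := hx
    have hx4' : (0:ℝ) ≤ 4 - x := by linarith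
    rw [Real.sqrt_eq_rpow, Real.mul_rpow hx0.le hx4', ← Real.rpow_natCast x k]
    rw [show (k : ℝ) - 1/2 = (k : ℝ) + 1/2 - 1 by ring, Real.rpow_sub hx0, Real.rpow_one,
      Real.rpow_add hx0]
    field_simp
  rw [hcong, ← integral_Ioc_eq_integral_Ioo, ← intervalIntegral.integral_of_le h4.le,
    intervalIntegral.integral_div, beta_eval]
  rw [mul_comm (2 * Real.pi), mul_div_assoc, div_self hpi.ne', mul_one]
  -- now the combinatorial identity
  rcases Nat.eq_zero_or_pos k with rfl | hk
  · norm_num [Nat.factorial]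
  · rw [if_neg hk.ne']
    have h1 : k ≤ 2 * k := by omega
    have h2 : k - 1 ≤ 2 * k := by omega
    rw [Nat.cast_choose ℝ h1, Nat.cast_choose ℝ h2]
    have e1 : 2 * k - k = k := by omega
    have e2 : 2 * k - (k - 1) = k + 1 := by omega
    rw [e1, e2]
    obtain ⟨m, rfl⟩ : ∃ m, k = m + 1 := ⟨k - 1, by omega⟩
    simp only [Nat.add_sub_cancel]
    have hf : ∀ n : ℕ, (Nat.factorial n : ℝ) ≠ 0 :=
      fun n => Nat.cast_ne_zero.mpr n.factorial_ne_zero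
    have hm1 : (Nat.factorial (m+1) : ℝ) = (m+1) * Nat.factorial m := by
      rw [Nat.factorial_succ]; push_cast; ring
    have hm2 : (Nat.factorial (m+2) : ℝ) = (m+2) * Nat.factorial (m+1) := by
      rw [show m+2 = (m+1)+1 from rfl, Nat.factorial_succ]; push_cast; ring
    rw [hm2, hm1]
    field_simp
    ring
end
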